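/- For every nonnegative integer m, the sum over k from 0 to m of C(2k,k)^2 * C(4k,2k) * C(k, m-k) * (-64)^(m-k) equals the sum over k from 0 to m of C(2k,k) * C(4k,2k) * C(2(m-k), m-k) * C(4(m-k), 2(m-k)). -/

import Mathlib

set_option maxHeartbeats 2000000

open Finset



noncomputable def bq (k : ℕ) : ℚ := (Nat.centralBinom k : ℚ) * (Nat.centralBinom (2*k) : ℚ)
noncomputable def aq (k : ℕ) : ℚ := (Nat.centralBinom k : ℚ)^2 * (Nat.centralBinom (2*k) : ℚ)

lemma cB_succ (n : ℕ) : (Nat.centralBinom (n+1) : ℚ) = 2*(2*(n:ℚ)+1) * (Nat.centralBinom n : ℚ) / ((n:ℚ)+1) := by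
  rw [eq_div_iff (by positivity)]
  have h := Nat.succ_mul_centralBinom_succ n
  have h' : ((n:ℚ)+1) * (Nat.centralBinom (n+1) : ℚ) = 2*(2*(n:ℚ)+1) * (Nat.centralBinom n : ℚ) := by
    exact_mod_cast congrArg (Nat.cast (R := ℚ)) h
  linarith [h']

lemma bq_succ (k : ℕ) : bq (k+1) = 4*(4*(k:ℚ)+1)*(4*(k:ℚ)+3) * bq k / ((k:ℚ)+1)^2 := by
  unfold bq
  have e : 2*(k+1) = (2*k+1)+1 := by ring
  rw [e, cB_succ (2*k+1), cB_succ (2*k), cB_succ k]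
  push_cast
  field_simp
  ring

lemma aq_succ (k : ℕ) : aq (k+1) = 8*(2*(k:ℚ)+1)*(4*(k:ℚ)+1)*(4*(k:ℚ)+3) * aq k / ((k:ℚ)+1)^3 := by
  unfold aq
  have e : 2*(k+1) = (2*k+1)+1 := by ring
  rw [e, cB_succ (2*k+1), cB_succ (2*k), cB_succ k]
  push_cast
  field_simp
  ring

lemma chooseA (n l : ℕ) : ((n.choose (l+1) : ℚ)) = ((n:ℚ)-l) * (n.choose l : ℚ) / ((l:ℚ)+1) := by
  rw [eq_div_iff (by positivity)]
  rcases le_or_gt l n with h | h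
  · have := Nat.choose_succ_right_eq n l
    have h' : ((n.choose (l+1) : ℚ)) * ((l:ℚ)+1) = (n.choose l : ℚ) * ((n:ℚ) - l) := by
      have hc : ((n - l : ℕ) : ℚ) = (n:ℚ) - l := by
        push_cast [Nat.cast_sub h]; ring
      calc ((n.choose (l+1) : ℚ)) * ((l:ℚ)+1) = ((n.choose (l+1) * (l+1) : ℕ) : ℚ) := by push_cast; ring
        _ = ((n.choose l * (n - l) : ℕ) : ℚ) := by rw [this]
        _ = (n.choose l : ℚ) * ((n:ℚ) - l) := by push_cast [Nat.cast_sub h]; ring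
    linarith [h']
  · rw [Nat.choose_eq_zero_of_lt h, Nat.choose_eq_zero_of_lt (by omega)]
    simp

lemma chooseB (n l : ℕ) : ((n:ℚ)+1-l) * ((n+1).choose l : ℚ) = ((n:ℚ)+1) * (n.choose l : ℚ) := by
  cases l with
  | zero => simp
  | succ s =>
    rw [Nat.choose_succ_succ]
    push_cast
    have h := chooseA n s
    rw [chooseA n s]
    by_cases hs : ((s:ℚ)+1) = 0
    · exact absurd hs (by positivity)
    · field_simp
      ring


lemma bq_zero : bq 0 = 1 := by simp [bq, Nat.centralBinom]
lemma bq_one : bq 1 = 12 := by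
  rw [show (1:ℕ) = 0 + 1 from rfl, bq_succ 0, bq_zero]; norm_num

noncomputable def FT (m i : ℕ) : ℚ := if i ≤ m then bq i * bq (m - i) else 0

noncomputable def GT (m i : ℕ) : ℚ :=
  (if i ≤ m+1 then 64*(i:ℚ)^2*(3*(m:ℚ)-2*(i:ℚ)+4) * bq i * bq (m+1-i) else 0)
  + (if i ≤ m+2 then (i:ℚ)^2*(2*(i:ℚ)-3*(m:ℚ)-6) * bq i * bq (m+2-i) else 0)

lemma FT_eval (i j : ℕ) : FT (i+j) i = bq i * bq j := by
  rw [FT, if_pos (Nat.le_add_right i j), Nat.add_sub_cancel_left]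

lemma GT_eval (i j : ℕ) : GT (i+j) i
    = 64*(i:ℚ)^2*(3*((i:ℚ)+(j:ℚ))-2*(i:ℚ)+4) * bq i * bq (j+1)
    + (i:ℚ)^2*(2*(i:ℚ)-3*((i:ℚ)+(j:ℚ))-6) * bq i * bq (j+2) := by
  rw [GT, if_pos (by omega), if_pos (by omega),
    show i+j+1-i = j+1 by omega, show i+j+2-i = j+2 by omega]
  push_cast; ring

lemma GT_eval' (i j : ℕ) : GT (i+j) (i+1)
    = 64*((i:ℚ)+1)^2*(3*((i:ℚ)+(j:ℚ))-2*((i:ℚ)+1)+4) * bq (i+1) * bq j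
    + ((i:ℚ)+1)^2*(2*((i:ℚ)+1)-3*((i:ℚ)+(j:ℚ))-6) * bq (i+1) * bq (j+1) := by
  rw [GT, if_pos (by omega), if_pos (by omega),
    show i+j+1-(i+1) = j by omega, show i+j+2-(i+1) = j+1 by omega]
  push_cast; ring

lemma FT_eval1 (i j : ℕ) : FT (i+j+1) i = bq i * bq (j+1) := by
  rw [show i+j+1 = i+(j+1) by ring, FT_eval]
lemma FT_eval2 (i j : ℕ) : FT (i+j+2) i = bq i * bq (j+2) := by
  rw [show i+j+2 = i+(j+2) by ring, FT_eval]

lemma certT (m i : ℕ) :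
    1024*((m:ℚ)+1)*(2*(m:ℚ)+1)*(2*(m:ℚ)+3) * FT m i
    - 8*(2*(m:ℚ)+3)*(8*(m:ℚ)^2+24*(m:ℚ)+19) * FT (m+1) i
    + ((m:ℚ)+2)^3 * FT (m+2) i
    = GT m (i+1) - GT m i := by
  rcases le_or_gt i m with h | h
  · obtain ⟨j, rfl⟩ := Nat.exists_eq_add_of_le h
    rw [FT_eval, FT_eval1, FT_eval2, GT_eval, GT_eval',
      show j+2 = (j+1)+1 from rfl, bq_succ (j+1), bq_succ j, bq_succ i]
    push_cast
    have h1 : ((i:ℚ)+1) ≠ 0 := by positivity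
    have h2 : ((j:ℚ)+1) ≠ 0 := by positivity
    have h3 : ((j:ℚ)+1+1) ≠ 0 := by positivity
    field_simp
    ring
  · rcases (show i = m+1 ∨ i = m+2 ∨ m+3 ≤ i by omega) with rfl | h'
    · rw [FT, if_neg (by omega),
        show FT (m+1) (m+1) = bq (m+1) * bq 0 from by rw [show m+1 = (m+1)+0 by ring]; exact FT_eval (m+1) 0,
        show FT (m+2) (m+1) = bq (m+1) * bq 1 from FT_eval1 (m+1) 0,
        GT, if_neg (by omega), if_pos (by omega), show m+2-(m+1+1) = 0 by omega,
        GT, if_pos (by omega), if_pos (by omega), show m+1-(m+1) = 0 by omega,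
        show m+2-(m+1) = 1 by omega,
        show m+2 = (m+1)+1 from rfl, bq_succ (m+1), bq_zero, bq_one]
    -- continued below
      push_cast
      have h1 : ((m:ℚ)+1+1) ≠ 0 := by positivity
      field_simp
      ring
    · rcases h' with rfl | h''
      · rw [FT, if_neg (by omega), FT, if_neg (by omega),
          show m+2 = (m+2)+0 by ring, FT_eval, bq_zero,
          GT, if_neg (by omega), if_neg (by omega),
          GT, if_neg (by omega), if_pos (by omega), show m+2-(m+2) = 0 by omega, bq_zero]
        push_cast
        ring
      · rw [FT, if_neg (by omega), FT, if_neg (by omega), FT, if_neg (by omega),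
          GT, if_neg (by omega), if_neg (by omega),
          GT, if_neg (by omega), if_neg (by omega)]
        ring

noncomputable def Tq (m : ℕ) : ℚ := ∑ i ∈ Finset.range (m+1), FT m i

lemma Tq_ext (m N : ℕ) (h : m+1 ≤ N) : Tq m = ∑ i ∈ Finset.range N, FT m i := by
  unfold Tq
  refine Finset.sum_subset (Finset.range_subset_range.2 h) fun i _ hi => ?_
  rw [Finset.mem_range, not_lt] at hi
  rw [FT, if_neg (by omega)]

lemma Trec (m : ℕ) :
    1024*((m:ℚ)+1)*(2*(m:ℚ)+1)*(2*(m:ℚ)+3) * Tq m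
    - 8*(2*(m:ℚ)+3)*(8*(m:ℚ)^2+24*(m:ℚ)+19) * Tq (m+1)
    + ((m:ℚ)+2)^3 * Tq (m+2) = 0 := by
  rw [Tq_ext m (m+3) (by omega), Tq_ext (m+1) (m+3) (by omega), Tq_ext (m+2) (m+3) (by omega),
    Finset.mul_sum, Finset.mul_sum, Finset.mul_sum, ← Finset.sum_sub_distrib,
    ← Finset.sum_add_distrib]
  rw [Finset.sum_congr rfl (fun i _ => certT m i), Finset.sum_range_sub (GT m) (m+3)]
  rw [GT, if_neg (by omega), if_neg (by omega), GT, if_pos (by omega), if_pos (by omega)]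
  norm_num


noncomputable def FS (m k : ℕ) : ℚ :=
  if k ≤ m then aq k * (k.choose (m-k) : ℚ) * (-64:ℚ)^(m-k) else 0

noncomputable def GS (m k : ℕ) : ℚ :=
  (if k ≤ m+1 then 64*(k:ℚ)^2*(2*(k:ℚ)-(m:ℚ)-1) * aq k * (k.choose (m+1-k) : ℚ) * (-64:ℚ)^(m+1-k) else 0)
  + (if k ≤ m+2 then -(k:ℚ)^3 * aq k * (k.choose (m+2-k) : ℚ) * (-64:ℚ)^(m+2-k) else 0)

lemma FS_eval (k j : ℕ) : FS (k+j) k = aq k * (k.choose j : ℚ) * (-64:ℚ)^j := by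
  rw [FS, if_pos (Nat.le_add_right k j), Nat.add_sub_cancel_left]

lemma FS_eval1 (k j : ℕ) : FS (k+j+1) k = aq k * (k.choose (j+1) : ℚ) * (-64:ℚ)^(j+1) := by
  rw [show k+j+1 = k+(j+1) by ring, FS_eval]

lemma FS_eval2 (k j : ℕ) : FS (k+j+2) k = aq k * (k.choose (j+2) : ℚ) * (-64:ℚ)^(j+2) := by
  rw [show k+j+2 = k+(j+2) by ring, FS_eval]

lemma GS_eval (k j : ℕ) : GS (k+j) k
    = 64*(k:ℚ)^2*(2*(k:ℚ)-((k:ℚ)+(j:ℚ))-1) * aq k * (k.choose (j+1) : ℚ) * (-64:ℚ)^(j+1)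
    + -(k:ℚ)^3 * aq k * (k.choose (j+2) : ℚ) * (-64:ℚ)^(j+2) := by
  rw [GS, if_pos (by omega), if_pos (by omega),
    show k+j+1-k = j+1 by omega, show k+j+2-k = j+2 by omega]
  push_cast; ring

lemma GS_eval' (k j : ℕ) : GS (k+j) (k+1)
    = 64*((k:ℚ)+1)^2*(2*((k:ℚ)+1)-((k:ℚ)+(j:ℚ))-1) * aq (k+1) * ((k+1).choose j : ℚ) * (-64:ℚ)^j
    + -((k:ℚ)+1)^3 * aq (k+1) * ((k+1).choose (j+1) : ℚ) * (-64:ℚ)^(j+1) := by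
  rw [GS, if_pos (by omega), if_pos (by omega),
    show k+j+1-(k+1) = j by omega, show k+j+2-(k+1) = j+1 by omega]
  push_cast; ring

lemma certS (m k : ℕ) :
    1024*((m:ℚ)+1)*(2*(m:ℚ)+1)*(2*(m:ℚ)+3) * FS m k
    - 8*(2*(m:ℚ)+3)*(8*(m:ℚ)^2+24*(m:ℚ)+19) * FS (m+1) k
    + ((m:ℚ)+2)^3 * FS (m+2) k
    = GS m (k+1) - GS m k := by
  rcases le_or_gt k m with h | h
  · obtain ⟨j, rfl⟩ := Nat.exists_eq_add_of_le h
    rw [FS_eval, FS_eval1, FS_eval2, GS_eval, GS_eval']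
    by_cases hjk : j = k+1
    · subst hjk
      rw [Nat.choose_eq_zero_of_lt (by omega : k < k+1),
        Nat.choose_eq_zero_of_lt (by omega : k < k+1+1),
        Nat.choose_eq_zero_of_lt (by omega : k < k+1+2),
        Nat.choose_self, Nat.choose_eq_zero_of_lt (by omega : k+1 < k+1+1)]
      push_cast
      ring
    · have hne : ((k:ℚ)+1-(j:ℚ)) ≠ 0 := by
        intro hc
        apply hjk
        have : ((j:ℕ):ℚ) = ((k+1:ℕ):ℚ) := by push_cast; linarith
        exact_mod_cast this
      have hY : (((k+1).choose j : ℕ) : ℚ) = ((k:ℚ)+1) * (k.choose j : ℚ) / ((k:ℚ)+1-(j:ℚ)) := by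
        rw [eq_div_iff hne]
        linear_combination chooseB k j
      have hP : (((k+1).choose (j+1) : ℕ) : ℚ) = (k.choose j : ℚ) + (k.choose (j+1) : ℚ) := by
        push_cast [Nat.choose_succ_succ]; ring
      rw [show j+2 = (j+1)+1 from rfl, chooseA k (j+1), hP, hY, chooseA k j, aq_succ k]
      push_cast
      simp only [pow_succ]
      have h1 : ((k:ℚ)+1) ≠ 0 := by positivity
      have h2 : ((j:ℚ)+1) ≠ 0 := by positivity
      have h3 : ((j:ℚ)+1+1) ≠ 0 := by positivity
      field_simp
      ring
  · rcases (show k = m+1 ∨ k = m+2 ∨ m+3 ≤ k by omega) with rfl | h'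
    · rw [FS, if_neg (by omega),
        show FS (m+1) (m+1) = aq (m+1) * ((m+1).choose 0 : ℚ) * (-64:ℚ)^0 from by
          rw [show m+1 = (m+1)+0 by ring]; exact FS_eval (m+1) 0,
        show FS (m+2) (m+1) = aq (m+1) * ((m+1).choose 1 : ℚ) * (-64:ℚ)^1 from FS_eval1 (m+1) 0,
        GS, if_neg (by omega), if_pos (by omega), show m+2-(m+1+1) = 0 by omega,
        GS, if_pos (by omega), if_pos (by omega), show m+1-(m+1) = 0 by omega,
        show m+2-(m+1) = 1 by omega,
        aq_succ (m+1), Nat.choose_zero_right, Nat.choose_zero_right, Nat.choose_one_right]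
      push_cast
      have h1 : ((m:ℚ)+1+1) ≠ 0 := by positivity
      field_simp
      ring
    · rcases h' with rfl | h''
      · rw [FS, if_neg (by omega), FS, if_neg (by omega),
          show FS (m+2) (m+2) = aq (m+2) * ((m+2).choose 0 : ℚ) * (-64:ℚ)^0 from by
            rw [show m+2 = (m+2)+0 by ring]; exact FS_eval (m+2) 0,
          GS, if_neg (by omega), if_neg (by omega),
          GS, if_neg (by omega), if_pos (by omega), show m+2-(m+2) = 0 by omega,
          Nat.choose_zero_right]
        push_cast
        ring
      · rw [FS, if_neg (by omega), FS, if_neg (by omega), FS, if_neg (by omega),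
          GS, if_neg (by omega), if_neg (by omega),
          GS, if_neg (by omega), if_neg (by omega)]
        ring

noncomputable def Sq (m : ℕ) : ℚ := ∑ k ∈ Finset.range (m+1), FS m k

lemma Sq_ext (m N : ℕ) (h : m+1 ≤ N) : Sq m = ∑ k ∈ Finset.range N, FS m k := by
  unfold Sq
  refine Finset.sum_subset (Finset.range_subset_range.2 h) fun i _ hi => ?_
  rw [Finset.mem_range, not_lt] at hi
  rw [FS, if_neg (by omega)]

lemma Srec (m : ℕ) :
    1024*((m:ℚ)+1)*(2*(m:ℚ)+1)*(2*(m:ℚ)+3) * Sq m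
    - 8*(2*(m:ℚ)+3)*(8*(m:ℚ)^2+24*(m:ℚ)+19) * Sq (m+1)
    + ((m:ℚ)+2)^3 * Sq (m+2) = 0 := by
  rw [Sq_ext m (m+3) (by omega), Sq_ext (m+1) (m+3) (by omega), Sq_ext (m+2) (m+3) (by omega),
    Finset.mul_sum, Finset.mul_sum, Finset.mul_sum, ← Finset.sum_sub_distrib,
    ← Finset.sum_add_distrib]
  rw [Finset.sum_congr rfl (fun i _ => certS m i), Finset.sum_range_sub (GS m) (m+3)]
  rw [GS, if_neg (by omega), if_neg (by omega), GS, if_pos (by omega), if_pos (by omega)]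
  norm_num


lemma base0 : Sq 0 = Tq 0 := by
  norm_num [Sq, Tq, FS, FT, aq, bq, Finset.sum_range_succ, Nat.centralBinom]

lemma base1 : Sq 1 = Tq 1 := by
  norm_num [Sq, Tq, FS, FT, aq, bq, Finset.sum_range_succ, Nat.centralBinom,
    show Nat.choose 0 1 = 0 from rfl, show Nat.choose 2 1 = 2 from rfl,
    show Nat.choose 4 2 = 6 from rfl]

lemma key : ∀ m : ℕ, Sq m = Tq m ∧ Sq (m+1) = Tq (m+1) := by
  intro m
  induction m with
  | zero => exact ⟨base0, base1⟩
  | succ n ih =>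
    obtain ⟨h0, h1⟩ := ih
    refine ⟨h1, ?_⟩
    have hd : ((n:ℚ)+2)^3 * (Sq (n+2) - Tq (n+2)) = 0 := by
      linear_combination (Srec n) - (Trec n)
        - 1024*((n:ℚ)+1)*(2*(n:ℚ)+1)*(2*(n:ℚ)+3) * h0
        + 8*(2*(n:ℚ)+3)*(8*(n:ℚ)^2+24*(n:ℚ)+19) * h1
    have hc : ((n:ℚ)+2)^3 ≠ 0 := by positivity
    have := (mul_eq_zero.mp hd).resolve_left hc
    linarith [this]

theorem stmt_1 (m : ℕ) :
    ∑ k ∈ Finset.range (m + 1),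
      ((Nat.choose (2 * k) k : ℤ) ^ 2 * Nat.choose (4 * k) (2 * k) *
        Nat.choose k (m - k) * (-64) ^ (m - k))
    = ∑ k ∈ Finset.range (m + 1),
      ((Nat.choose (2 * k) k : ℤ) * Nat.choose (4 * k) (2 * k) *
        Nat.choose (2 * (m - k)) (m - k) * Nat.choose (4 * (m - k)) (2 * (m - k))) := by
  have hL : ((∑ k ∈ Finset.range (m + 1),
      ((Nat.choose (2 * k) k : ℤ) ^ 2 * Nat.choose (4 * k) (2 * k) *
        Nat.choose k (m - k) * (-64) ^ (m - k)) : ℤ) : ℚ) = Sq m := by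
    push_cast
    rw [Sq]
    refine Finset.sum_congr rfl fun k hk => ?_
    rw [Finset.mem_range] at hk
    rw [FS, if_pos (by omega)]
    simp only [aq, Nat.centralBinom]
    rw [show 2*(2*k) = 4*k by ring]
  have hR : ((∑ k ∈ Finset.range (m + 1),
      ((Nat.choose (2 * k) k : ℤ) * Nat.choose (4 * k) (2 * k) *
        Nat.choose (2 * (m - k)) (m - k) * Nat.choose (4 * (m - k)) (2 * (m - k))) : ℤ) : ℚ) = Tq m := by
    push_cast
    rw [Tq]
    refine Finset.sum_congr rfl fun k hk => ?_
    rw [Finset.mem_range] at hk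
    rw [FT, if_pos (by omega)]
    simp only [bq, Nat.centralBinom]
    rw [show 2*(2*k) = 4*k by ring, show 2*(2*(m-k)) = 4*(m-k) by ring]
    ring
  have := (key m).1
  have hq : ((∑ k ∈ Finset.range (m + 1),
      ((Nat.choose (2 * k) k : ℤ) ^ 2 * Nat.choose (4 * k) (2 * k) *
        Nat.choose k (m - k) * (-64) ^ (m - k)) : ℤ) : ℚ)
      = ((∑ k ∈ Finset.range (m + 1),
      ((Nat.choose (2 * k) k : ℤ) * Nat.choose (4 * k) (2 * k) *
        Nat.choose (2 * (m - k)) (m - k) * Nat.choose (4 * (m - k)) (2 * (m - k))) : ℤ) : ℚ) := by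
    rw [hL, hR, this]
  exact_mod_cast hq
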